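/- Let X be a locally path connected and semilocally simply connected topological space. Then the quotient map q : P(X) → Π₁(X), sending a path to its path-homotopy class, is an open map (where P(X) carries the compact-open topology and Π₁(X) the quotient topology). -/

import Mathlib

open unitInterval

noncomputable section

variable {X : Type*} [TopologicalSpace X]

/-- The path-homotopy (homotopy relative to `{0,1}`) relation on `C(I, X)`. -/
def pRel (f g : C(I, X)) : Prop := f.HomotopicRel g {0, 1}

/-- The path-homotopy setoid on `C(I, X)`. -/
def pSetoid (X : Type*) [TopologicalSpace X] : Setoid C(I, X) :=
  ⟨pRel, ContinuousMap.HomotopicRel.equivalence⟩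

/-- The fundamental groupoid `Π₁(X)` as the quotient of the path space `P(X) = C(I, X)`
(with the compact-open topology) by path homotopy; it carries the quotient (CO') topology. -/
abbrev Pi1 (X : Type*) [TopologicalSpace X] := Quotient (pSetoid X)

/-- The quotient map `q : P(X) → Π₁(X)`. -/
def pq : C(I, X) → Pi1 X := Quotient.mk (pSetoid X)

theorem pRel.endpts {f g : C(I, X)} (h : pRel f g) {t : I} (ht : t ∈ ({0, 1} : Set I)) :
    f t = g t := h.some.fst_eq_snd ht

/-- The source map `s : Π₁(X) → X`, `[γ] ↦ γ(0)`. -/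
def srcMap : Pi1 X → X :=
  Quotient.lift (fun f : C(I, X) => f 0) fun _ _ h =>
    pRel.endpts h (by simp)

/-- The range map `r : Π₁(X) → X`, `[γ] ↦ γ(1)`. -/
def rngMap : Pi1 X → X :=
  Quotient.lift (fun f : C(I, X) => f 1) fun _ _ h =>
    pRel.endpts h (by simp)

/-- A continuous map `I → X` regarded as a `Path` between its endpoints. -/
def toPath (f : C(I, X)) : Path (f 0) (f 1) := ⟨f, rfl, rfl⟩

/-- Concatenation `α ⧠ β` of paths: traverse `β` first and then `α`
(given `β 1 = α 0`). -/
def concat (α β : C(I, X)) (h : β 1 = α 0) : C(I, X) :=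
  ((toPath β).trans ((toPath α).cast h rfl)).toContinuousMap

@[simp] theorem concat_zero (α β : C(I, X)) (h : β 1 = α 0) : concat α β h 0 = β 0 :=
  ((toPath β).trans ((toPath α).cast h rfl)).source

@[simp] theorem concat_one (α β : C(I, X)) (h : β 1 = α 0) : concat α β h 1 = α 1 :=
  ((toPath β).trans ((toPath α).cast h rfl)).target

/-- The set `N([γ], U, V) = {[δ ⧠ γ ⧠ θ] : δ a path in U with δ 0 = γ 1,
θ a path in V with θ 1 = γ 0}` in `Π₁(X)`. -/
def Nhd (a : Pi1 X) (U V : Set X) : Set (Pi1 X) :=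
  { b | ∃ (γ δ θ : C(I, X)) (h₁ : θ 1 = γ 0) (h₂ : γ 1 = δ 0),
      pq γ = a ∧ Set.range δ ⊆ U ∧ Set.range θ ⊆ V ∧
      b = pq (concat δ (concat γ θ h₁) ((concat_one γ θ h₁).trans h₂)) }

/-- A subset `U ⊆ X` is relatively inessential in `X` if every loop in `U` is
null-homotopic (path-homotopic to a constant path) in `X`. -/
def RelInessential (X : Type*) [TopologicalSpace X] (U : Set X) : Prop :=
  ∀ γ : C(I, X), Set.range γ ⊆ U → γ 1 = γ 0 →
    pRel γ (ContinuousMap.const I (γ 0))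

/-- `X` is semilocally simply connected if every point has a relatively inessential
open neighbourhood. -/
def SemilocSimplyConnected (X : Type*) [TopologicalSpace X] : Prop :=
  ∀ x : X, ∃ U : Set X, IsOpen U ∧ x ∈ U ∧ RelInessential X U


/-! ### toolkit -/

instance : ContractibleSpace I :=
  (convex_Icc (0:ℝ) 1).contractibleSpace (Set.nonempty_Icc.2 zero_le_one)

theorem pRel.rfl (f : C(I, X)) : pRel f f := ContinuousMap.HomotopicRel.refl f

theorem pRel.symm' {f g : C(I, X)} (h : pRel f g) : pRel g f := h.symm

theorem pRel.trans' {f g k : C(I, X)} (h : pRel f g) (h' : pRel g k) : pRel f k := h.trans h'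

theorem prel_of_homotopic {x y : X} {p q : Path x y} (h : p.Homotopic q) :
    pRel p.toContinuousMap q.toContinuousMap := h

theorem prel_congr {f g f' g' : C(I, X)} (hf : ⇑f = ⇑f') (hg : ⇑g = ⇑g')
    (h : pRel f g) : pRel f' g' := by
  obtain rfl : f = f' := DFunLike.coe_injective hf
  obtain rfl : g = g' := DFunLike.coe_injective hg
  exact h

theorem trans_coe_congr {x y z x' y' z' : X} {p : Path x y} {q : Path y z}
    {p' : Path x' y'} {q' : Path y' z'} (hp : ⇑p = ⇑p') (hq : ⇑q = ⇑q') :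
    ⇑(p.trans q) = ⇑(p'.trans q') := by
  funext t
  rw [Path.trans_apply, Path.trans_apply]
  split_ifs with h
  · exact congrFun hp _
  · exact congrFun hq _

theorem concat_coe (α β : C(I, X)) (h : β 1 = α 0) :
    ⇑(concat α β h) = ⇑((toPath β).trans ((toPath α).cast h rfl)) := rfl

/-- reparametrization invariance -/
theorem prel_reparam (γ : C(I, X)) (φ ψ : C(I, I)) (h0 : φ 0 = ψ 0) (h1 : φ 1 = ψ 1) :
    pRel (γ.comp φ) (γ.comp ψ) := by
  let pφ : Path (φ 0) (φ 1) := ⟨φ, rfl, rfl⟩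
  let pψ : Path (φ 0) (φ 1) := (⟨ψ, rfl, rfl⟩ : Path (ψ 0) (ψ 1)).cast h0 h1
  have hh : pφ.Homotopic pψ := SimplyConnectedSpace.paths_homotopic pφ pψ
  have := prel_of_homotopic (hh.map γ)
  refine prel_congr ?_ ?_ this <;> rfl

theorem prel_concat {α α' β β' : C(I, X)} (ha : pRel α α') (hb : pRel β β')
    (h : β 1 = α 0) (h' : β' 1 = α' 0) :
    pRel (concat α β h) (concat α' β' h') := by
  have e0 : β 0 = β' 0 := hb.endpts (by simp)
  have e1 : β 1 = β' 1 := hb.endpts (by simp)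
  have ea0 : α 0 = α' 0 := ha.endpts (by simp)
  have ea1 : α 1 = α' 1 := ha.endpts (by simp)
  let B' : Path (β 0) (β 1) := (toPath β').cast e0 e1
  let A' : Path (β 1) (α 1) := (toPath α').cast (e1.trans h') ea1
  have hB : (toPath β).Homotopic B' := hb
  have hA : ((toPath α).cast h rfl).Homotopic A' := ha
  have := prel_of_homotopic (hB.hcomp hA)
  refine prel_congr rfl ?_ this
  rw [concat_coe]
  exact trans_coe_congr rfl rfl

theorem prel_unitR (α : C(I, X)) :
    pRel (concat α (ContinuousMap.const I (α 0)) rfl) α := by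
  have H : ((Path.refl (α 0)).trans (toPath α)).Homotopic (toPath α) :=
    ⟨Path.Homotopy.reflTrans (toPath α)⟩
  refine prel_congr ?_ rfl (prel_of_homotopic H)
  delta concat
  exact trans_coe_congr rfl rfl

theorem prel_unitL (β : C(I, X)) :
    pRel (concat (ContinuousMap.const I (β 1)) β rfl) β := by
  have H : ((toPath β).trans (Path.refl (β 1))).Homotopic (toPath β) :=
    ⟨Path.Homotopy.transRefl (toPath β)⟩
  refine prel_congr ?_ rfl (prel_of_homotopic H)
  delta concat
  exact trans_coe_congr rfl rfl

def rev (γ : C(I, X)) : C(I, X) := γ.comp ⟨σ, continuous_symm⟩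

@[simp] theorem rev_zero (γ : C(I, X)) : rev γ 0 = γ 1 := by simp [rev]

@[simp] theorem rev_one (γ : C(I, X)) : rev γ 1 = γ 0 := by simp [rev]

theorem prel_inv (α : C(I, X)) :
    pRel (concat α (rev α) ((rev_one α).trans rfl))
      (ContinuousMap.const I (α 1)) := by
  have H : ((toPath α).symm.trans (toPath α)).Homotopic (Path.refl (α 1)) :=
    Path.Homotopic.symm ⟨Path.Homotopy.reflSymmTrans (toPath α)⟩
  refine prel_congr ?_ rfl (prel_of_homotopic H)
  delta concat
  exact trans_coe_congr rfl rfl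

theorem prel_assoc (a b c : C(I, X)) (h1 : c 1 = b 0) (h2 : b 1 = a 0) :
    pRel (concat (concat a b h2) c (h1.trans (concat_zero a b h2).symm))
      (concat a (concat b c h1) ((concat_one b c h1).trans h2)) := by
  let C : Path (c 0) (c 1) := toPath c
  let B : Path (c 1) (b 1) := (toPath b).cast h1 rfl
  let A : Path (b 1) (a 1) := (toPath a).cast h2 rfl
  have e1 : ⇑(concat (concat a b h2) c (h1.trans (concat_zero a b h2).symm))
      = ⇑(C.trans (B.trans A)) := by
    rw [concat_coe]
    refine trans_coe_congr rfl ?_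
    show ⇑((toPath (concat a b h2)).cast _ rfl) = ⇑(B.trans A)
    rw [Path.cast_coe]
    show ⇑(concat a b h2) = ⇑(B.trans A)
    rw [concat_coe]
    exact trans_coe_congr rfl rfl
  have e2 : ⇑(concat a (concat b c h1) ((concat_one b c h1).trans h2))
      = ⇑((C.trans B).trans A) := by
    rw [concat_coe]
    refine trans_coe_congr ?_ rfl
    show ⇑(concat b c h1) = ⇑(C.trans B)
    rw [concat_coe]
  exact prel_congr e1.symm e2.symm
    (prel_of_homotopic (Path.Homotopic.symm ⟨Path.Homotopy.transAssoc C B A⟩))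

/-! ### subpaths -/

def affine (a b : I) : C(I, I) :=
  ⟨fun t => ⟨(1 - (t:ℝ)) * a + t * b, by
      constructor
      · have := t.2.1; have := t.2.2
        nlinarith [a.2.1, b.2.1]
      · nlinarith [t.2.1, t.2.2, a.2.1, a.2.2, b.2.1, b.2.2]⟩,
    by
      refine Continuous.subtype_mk ?_ _
      exact ((continuous_const.sub continuous_subtype_val).mul continuous_const).add
        (continuous_subtype_val.mul continuous_const)⟩

@[simp] theorem affine_apply_coe (a b t : I) :
    (affine a b t : ℝ) = (1 - (t:ℝ)) * a + t * b := rfl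

@[simp] theorem affine_zero (a b : I) : affine a b 0 = a := by
  ext; simp

@[simp] theorem affine_one (a b : I) : affine a b 1 = b := by
  ext; simp

def subp (γ : C(I, X)) (a b : I) : C(I, X) := γ.comp (affine a b)

@[simp] theorem subp_apply (γ : C(I, X)) (a b t : I) : subp γ a b t = γ (affine a b t) := rfl

@[simp] theorem subp_zero (γ : C(I, X)) (a b : I) : subp γ a b 0 = γ a := by simp [subp]

@[simp] theorem subp_one (γ : C(I, X)) (a b : I) : subp γ a b 1 = γ b := by simp [subp]

def pathAffine (a b : I) : Path a b := ⟨affine a b, affine_zero a b, affine_one a b⟩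

theorem prel_glue (γ : C(I, X)) (a b c : I) :
    pRel (subp γ a c)
      (concat (subp γ b c) (subp γ a b) ((subp_one γ a b).trans (subp_zero γ b c).symm)) := by
  have hcoe : ⇑(concat (subp γ b c) (subp γ a b) ((subp_one γ a b).trans (subp_zero γ b c).symm))
      = ⇑(γ.comp ((pathAffine a b).trans (pathAffine b c)).toContinuousMap) := by
    funext t
    rw [concat_coe]
    show ((toPath (subp γ a b)).trans ((toPath (subp γ b c)).cast _ rfl)) t
      = γ (((pathAffine a b).trans (pathAffine b c)) t)
    rw [Path.trans_apply, Path.trans_apply]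
    split_ifs <;> rfl
  have h1 : pRel (γ.comp (affine a c))
      (γ.comp ((pathAffine a b).trans (pathAffine b c)).toContinuousMap) := by
    refine prel_reparam γ _ _ ?_ ?_
    · show affine a c 0 = ((pathAffine a b).trans (pathAffine b c)) 0
      simp
    · show affine a c 1 = ((pathAffine a b).trans (pathAffine b c)) 1
      simp
  exact prel_congr rfl hcoe.symm h1

theorem prel_cancel {A B : C(I, X)} (h0 : A 0 = B 0) (h1 : A 1 = B 1)
    (hL : pRel (concat (rev A) B (h1.symm.trans (rev_zero A).symm))
      (ContinuousMap.const I (A 0))) : pRel A B := by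
  set L := concat (rev A) B (h1.symm.trans (rev_zero A).symm) with hLdef
  have pfL : L 1 = A 0 := by rw [hLdef, concat_one, rev_one]
  have step1 : pRel A (concat A L pfL) := by
    refine (prel_unitR A).symm'.trans' ?_
    exact prel_concat (pRel.rfl A) hL.symm' rfl pfL
  have step2 : pRel (concat A L pfL)
      (concat (concat A (rev A) ((rev_one A).trans rfl)) B
        ((h1.symm.trans (rev_zero A).symm).trans (concat_zero _ _ _).symm)) :=
    (prel_assoc A (rev A) B (h1.symm.trans (rev_zero A).symm) (rev_one A)).symm'
  have step3 : pRel (concat (concat A (rev A) ((rev_one A).trans rfl)) B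
        ((h1.symm.trans (rev_zero A).symm).trans (concat_zero _ _ _).symm))
      (concat (ContinuousMap.const I (A 1)) B h1.symm) :=
    prel_concat (prel_inv A) (pRel.rfl B) _ _
  have step4 : pRel (concat (ContinuousMap.const I (A 1)) B h1.symm) B := by
    refine prel_congr ?_ rfl (prel_unitL B)
    delta concat
    exact trans_coe_congr rfl (funext fun t => h1.symm)
  exact ((step1.trans' step2).trans' step3).trans' step4

theorem range_concat (α β : C(I, X)) (h : β 1 = α 0) :
    Set.range (concat α β h) = Set.range β ∪ Set.range α := by
  have := Path.trans_range (toPath β) ((toPath α).cast h rfl)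
  rw [concat_coe]
  simp only [Path.cast_coe] at this
  exact this

theorem range_rev (γ : C(I, X)) : Set.range (rev γ) = Set.range γ := by
  apply Set.Subset.antisymm
  · rintro _ ⟨t, rfl⟩; exact ⟨σ t, rfl⟩
  · rintro _ ⟨t, rfl⟩
    exact ⟨σ t, by simp [rev]⟩

/-! ### nodes -/

def nd (m i : ℕ) : I :=
  ⟨min ((i : ℝ) / m) 1, le_min (by positivity) zero_le_one, min_le_right _ _⟩

theorem nd_coe {m i : ℕ} (him : i ≤ m) (hm : 1 ≤ m) : (nd m i : ℝ) = (i : ℝ) / m := by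
  have hm' : (0:ℝ) < m := by exact_mod_cast hm
  exact min_eq_left (by rw [div_le_one hm']; exact_mod_cast him)

@[simp] theorem nd_zero (m : ℕ) : nd m 0 = 0 := by
  ext; simp [nd]

theorem nd_self {m : ℕ} (hm : 1 ≤ m) : nd m m = 1 := by
  have hm' : (0:ℝ) < m := by exact_mod_cast hm
  ext; simp [nd, div_self hm'.ne']

/-! ### segment containment helper -/

theorem seg_mem {m : ℕ} (hm : 1 ≤ m) (γ : C(I, X)) {Q : Set X} (i : ℕ) (him : i + 1 ≤ m)
    (hγ : ∀ t : I, ((i:ℝ)) / m ≤ t → (t:ℝ) ≤ ((i:ℝ) + 1) / m → γ t ∈ Q) :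
    ∀ t, subp γ (nd m i) (nd m (i + 1)) t ∈ Q := by
  intro t
  have hm' : (0:ℝ) < m := by exact_mod_cast hm
  have ha : (nd m i : ℝ) = i / m := nd_coe (by omega) hm
  have hb : (nd m (i+1) : ℝ) = ((i:ℝ) + 1) / m := by
    rw [nd_coe him hm]; push_cast; ring
  have h1 : (i:ℝ)/m ≤ ((i:ℝ)+1)/m := by gcongr <;> linarith
  have ht0 := t.2.1
  have ht1 := t.2.2
  refine hγ (affine (nd m i) (nd m (i+1)) t) ?_ ?_
  · rw [affine_apply_coe, ha, hb]; nlinarith [h1]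
  · rw [affine_apply_coe, ha, hb]; nlinarith [h1]

/-! ### the key homotopy lemma -/

theorem lemH {X : Type*} [TopologicalSpace X] (m : ℕ) (hm : 1 ≤ m) (P : ℕ → Set X)
    (hP : ∀ j, 1 ≤ j → j ≤ m → RelInessential X (P j))
    (f h : C(I, X))
    (hf : ∀ j, 1 ≤ j → j ≤ m → ∀ t : I, ((j:ℝ)-1)/m ≤ t → (t:ℝ) ≤ j/m → f t ∈ P j)
    (hh : ∀ j, 1 ≤ j → j ≤ m → ∀ t : I, ((j:ℝ)-1)/m ≤ t → (t:ℝ) ≤ j/m → h t ∈ P j)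
    (lam : ℕ → C(I, X))
    (hl0 : ∀ i, i ≤ m → lam i 0 = f (nd m i))
    (hl1 : ∀ i, i ≤ m → lam i 1 = h (nd m i))
    (hlr : ∀ i, i ≤ m → Set.range (lam i) ⊆ P i ∩ P (i+1)) :
    ∃ (θ δ : C(I, X)) (h₁ : θ 1 = f 0) (h₂ : f 1 = δ 0),
      θ 0 = h 0 ∧ δ 1 = h 1 ∧ Set.range θ ⊆ P 0 ∩ P 1 ∧ Set.range δ ⊆ P m ∩ P (m+1) ∧
      pRel h (concat δ (concat f θ h₁) ((concat_one f θ h₁).trans h₂)) := by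
  have claim : ∀ i, i ≤ m →
      ∀ (pf1 : rev (lam 0) 1 = subp f 0 (nd m i) 0)
        (pf2 : concat (subp f 0 (nd m i)) (rev (lam 0)) pf1 1 = lam i 0),
      pRel (subp h 0 (nd m i))
        (concat (lam i) (concat (subp f 0 (nd m i)) (rev (lam 0)) pf1) pf2) := by
    intro i
    induction i with
    | zero =>
      intro _ pf1 pf2
      have e1 : pRel (concat (subp f 0 (nd m 0)) (rev (lam 0)) pf1) (rev (lam 0)) := by
        refine prel_congr ?_ rfl (prel_unitL (rev (lam 0)))
        delta concat
        refine trans_coe_congr rfl ?_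
        funext t
        show (ContinuousMap.const I (rev (lam 0) 1)) t = subp f 0 (nd m 0) t
        rw [ContinuousMap.const_apply, rev_one, hl0 0 (by omega), subp_apply]
        congr 1
        ext; simp [nd]
      have e2 : pRel (concat (lam 0) (concat (subp f 0 (nd m 0)) (rev (lam 0)) pf1) pf2)
          (concat (lam 0) (rev (lam 0)) (rev_one (lam 0))) :=
        prel_concat (pRel.rfl (lam 0)) e1 pf2 (rev_one (lam 0))
      have e3 := prel_inv (lam 0)
      have e4 : pRel (subp h 0 (nd m 0)) (ContinuousMap.const I ((lam 0) 1)) := by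
        refine prel_congr ?_ rfl (pRel.rfl (ContinuousMap.const I ((lam 0) 1)))
        funext t
        show (ContinuousMap.const I ((lam 0) 1)) t = subp h 0 (nd m 0) t
        rw [ContinuousMap.const_apply, hl1 0 (by omega), subp_apply]
        congr 1
        ext; simp [nd]
      exact (e4.trans' e3.symm').trans' e2.symm'
    | succ i IH =>
      intro hi1 pf1' pf2'
      have him : i ≤ m := by omega
      have pf1i : rev (lam 0) 1 = subp f 0 (nd m i) 0 := by
        rw [rev_one, subp_zero, hl0 0 (by omega), nd_zero]
      have pf2i : concat (subp f 0 (nd m i)) (rev (lam 0)) pf1i 1 = lam i 0 := by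
        rw [concat_one, subp_one, hl0 i him]
      have IHi := IH him pf1i pf2i
      have cast1 : ((i+1:ℕ):ℝ) - 1 = (i:ℝ) := by push_cast; ring
      have cast2 : ((i+1:ℕ):ℝ) = (i:ℝ)+1 := by push_cast; ring
      have ea : lam i 0 = f (nd m i) := hl0 i him
      have eb : lam (i+1) 0 = f (nd m (i+1)) := hl0 (i+1) hi1
      have ea' : lam i 1 = h (nd m i) := hl1 i him
      have eb' : lam (i+1) 1 = h (nd m (i+1)) := hl1 (i+1) hi1
      have pfA : lam i 1 = subp h (nd m i) (nd m (i+1)) 0 :=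
        ea'.trans (subp_zero h (nd m i) (nd m (i+1))).symm
      have pfB : subp f (nd m i) (nd m (i+1)) 1 = lam (i+1) 0 :=
        (subp_one f (nd m i) (nd m (i+1))).trans eb.symm
      have h0AB : concat (subp h (nd m i) (nd m (i+1))) (lam i) pfA 0
          = concat (lam (i+1)) (subp f (nd m i) (nd m (i+1))) pfB 0 := by
        rw [concat_zero, concat_zero, ea, subp_zero]
      have h1AB : concat (subp h (nd m i) (nd m (i+1))) (lam i) pfA 1
          = concat (lam (i+1)) (subp f (nd m i) (nd m (i+1))) pfB 1 := by
        rw [concat_one, concat_one, eb', subp_one]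
      have hhseg : ∀ t, subp h (nd m i) (nd m (i+1)) t ∈ P (i+1) := by
        refine seg_mem hm h i hi1 (fun t ht1 ht2 => hh (i+1) (by omega) hi1 t ?_ ?_)
        · rw [cast1]; exact ht1
        · rw [cast2]; exact ht2
      have hfseg : ∀ t, subp f (nd m i) (nd m (i+1)) t ∈ P (i+1) := by
        refine seg_mem hm f i hi1 (fun t ht1 ht2 => hf (i+1) (by omega) hi1 t ?_ ?_)
        · rw [cast1]; exact ht1
        · rw [cast2]; exact ht2
      have hlami : Set.range (lam i) ⊆ P (i+1) :=
        (hlr i him).trans Set.inter_subset_right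
      have hlami1 : Set.range (lam (i+1)) ⊆ P (i+1) :=
        (hlr (i+1) hi1).trans Set.inter_subset_left
      have hrangeL : Set.range (concat
          (rev (concat (subp h (nd m i) (nd m (i+1))) (lam i) pfA))
          (concat (lam (i+1)) (subp f (nd m i) (nd m (i+1))) pfB)
          (h1AB.symm.trans (rev_zero _).symm)) ⊆ P (i+1) := by
        rw [range_concat]
        apply Set.union_subset
        · rw [range_concat]
          apply Set.union_subset
          · rintro _ ⟨t, rfl⟩; exact hfseg t
          · exact hlami1
        · rw [range_rev, range_concat]
          apply Set.union_subset
          · exact hlami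
          · rintro _ ⟨t, rfl⟩; exact hhseg t
      have hL10 : (concat
          (rev (concat (subp h (nd m i) (nd m (i+1))) (lam i) pfA))
          (concat (lam (i+1)) (subp f (nd m i) (nd m (i+1))) pfB)
          (h1AB.symm.trans (rev_zero _).symm)) 1
          = (concat
          (rev (concat (subp h (nd m i) (nd m (i+1))) (lam i) pfA))
          (concat (lam (i+1)) (subp f (nd m i) (nd m (i+1))) pfB)
          (h1AB.symm.trans (rev_zero _).symm)) 0 := by
        rw [concat_one, concat_zero, rev_one, concat_zero, concat_zero, ea, subp_zero]
      have hnull := hP (i+1) (by omega) hi1 _ hrangeL hL10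
      have hnull' : pRel (concat
          (rev (concat (subp h (nd m i) (nd m (i+1))) (lam i) pfA))
          (concat (lam (i+1)) (subp f (nd m i) (nd m (i+1))) pfB)
          (h1AB.symm.trans (rev_zero _).symm))
          (ContinuousMap.const I (concat (subp h (nd m i) (nd m (i+1))) (lam i) pfA 0)) := by
        refine prel_congr rfl ?_ hnull
        funext t
        show _ = _
        rw [ContinuousMap.const_apply, ContinuousMap.const_apply, concat_zero, concat_zero,
          concat_zero, ea, subp_zero]
      have KEY : pRel (concat (subp h (nd m i) (nd m (i+1))) (lam i) pfA)
          (concat (lam (i+1)) (subp f (nd m i) (nd m (i+1))) pfB) :=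
        prel_cancel h0AB h1AB hnull'
      -- now the chain
      have hglue0 : subp h 0 (nd m i) 1 = subp h (nd m i) (nd m (i+1)) 0 :=
        (subp_one h 0 (nd m i)).trans (subp_zero h (nd m i) (nd m (i+1))).symm
      have c1 := prel_glue h 0 (nd m i) (nd m (i+1))
      have c2 := prel_concat (pRel.rfl (subp h (nd m i) (nd m (i+1)))) IHi hglue0
        ((concat_one _ _ pf2i).trans pfA)
      have c3 := (prel_assoc (subp h (nd m i) (nd m (i+1))) (lam i)
        (concat (subp f 0 (nd m i)) (rev (lam 0)) pf1i) pf2i pfA).symm'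
      have pfFi : concat (subp f 0 (nd m i)) (rev (lam 0)) pf1i 1
          = concat (subp h (nd m i) (nd m (i+1))) (lam i) pfA 0 := by
        rw [concat_one, concat_zero, subp_one, ea]
      have pfFi' : concat (subp f 0 (nd m i)) (rev (lam 0)) pf1i 1
          = concat (lam (i+1)) (subp f (nd m i) (nd m (i+1))) pfB 0 := by
        rw [concat_one, concat_zero, subp_one, subp_zero]
      have c4 := prel_concat KEY (pRel.rfl (concat (subp f 0 (nd m i)) (rev (lam 0)) pf1i))
        pfFi pfFi'
      have hFi1 : concat (subp f 0 (nd m i)) (rev (lam 0)) pf1i 1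
          = subp f (nd m i) (nd m (i+1)) 0 := by
        rw [concat_one, subp_one, subp_zero]
      have c5 := prel_assoc (lam (i+1)) (subp f (nd m i) (nd m (i+1)))
        (concat (subp f 0 (nd m i)) (rev (lam 0)) pf1i) hFi1 pfB
      have h2f : subp f 0 (nd m i) 1 = subp f (nd m i) (nd m (i+1)) 0 :=
        (subp_one f 0 (nd m i)).trans (subp_zero f (nd m i) (nd m (i+1))).symm
      have c6a := (prel_assoc (subp f (nd m i) (nd m (i+1))) (subp f 0 (nd m i))
        (rev (lam 0)) pf1i h2f).symm'
      have c6b := prel_concat (prel_glue f 0 (nd m i) (nd m (i+1))).symm'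
        (pRel.rfl (rev (lam 0)))
        (by rw [rev_one, concat_zero, subp_zero, hl0 0 (by omega), nd_zero])
        pf1'
      have c6 := c6a.trans' c6b
      have c7 := prel_concat (pRel.rfl (lam (i+1))) c6
        ((concat_one _ _ hFi1).trans pfB)
        pf2'
      exact ((((c1.trans' c2).trans' c3).trans' c4).trans' c5).trans' c7
  -- conclusion
  have hnd : nd m m = 1 := nd_self hm
  have pf1m : rev (lam 0) 1 = subp f 0 (nd m m) 0 := by
    rw [rev_one, subp_zero, hl0 0 (by omega), nd_zero]
  have pf2m : concat (subp f 0 (nd m m)) (rev (lam 0)) pf1m 1 = lam m 0 := by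
    rw [concat_one, subp_one, hl0 m le_rfl]
  have clm := claim m le_rfl pf1m pf2m
  have h₁ : rev (lam 0) 1 = f 0 := by
    rw [rev_one, hl0 0 (by omega), nd_zero]
  have h₂ : f 1 = lam m 0 := by
    rw [hl0 m le_rfl, hnd]
  refine ⟨rev (lam 0), lam m, h₁, h₂, ?_, ?_, ?_, ?_, ?_⟩
  · rw [rev_zero, hl1 0 (by omega), nd_zero]
  · rw [hl1 m le_rfl, hnd]
  · rw [range_rev]; exact hlr 0 (by omega)
  · exact hlr m le_rfl
  · -- pRel h (concat (lam m) (concat f (rev (lam 0)) h₁) _)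
    have eh : pRel h (subp h 0 (nd m m)) := by
      refine prel_congr ?_ rfl (prel_reparam h (ContinuousMap.id I) (affine 0 (nd m m)) ?_ ?_)
      · rw [ContinuousMap.comp_id]
      · ext; simp
      · ext; rw [hnd]; simp
    have ef : pRel (subp f 0 (nd m m)) f := by
      refine (prel_congr ?_ rfl (prel_reparam f (ContinuousMap.id I) (affine 0 (nd m m)) ?_ ?_)).symm'
      · rw [ContinuousMap.comp_id]
      · ext; simp
      · ext; rw [hnd]; simp
    have cfin := prel_concat (pRel.rfl (lam m))
      (prel_concat ef (pRel.rfl (rev (lam 0))) pf1m h₁) pf2m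
      ((concat_one f (rev (lam 0)) h₁).trans h₂)
    exact (eh.trans' clm).trans' cfin

/-! ### covering lemmas -/

theorem relIness_mono {X : Type*} [TopologicalSpace X] {U V : Set X} (h : U ⊆ V)
    (hV : RelInessential X V) : RelInessential X U :=
  fun γ hr h10 => hV γ (hr.trans h) h10

theorem cov_f {X : Type*} [TopologicalSpace X] (hX : SemilocSimplyConnected X)
    (f : C(I, X)) (A B : Set X) (hA : IsOpen A) (hB : IsOpen B) (hA0 : f 0 ∈ A) (hB1 : f 1 ∈ B) :
    ∃ (m : ℕ) (P : ℕ → Set X), 2 ≤ m ∧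
      (∀ j, 1 ≤ j → j ≤ m → IsOpen (P j) ∧ RelInessential X (P j) ∧
        (∀ t : I, ((j:ℝ)-1)/m ≤ t → (t:ℝ) ≤ j/m → f t ∈ P j)) ∧
      P 1 ⊆ A ∧ P m ⊆ B := by
  choose O hOopen hOmem hOin using hX
  -- neighbourhoods of the endpoints
  have hQ0 : IsOpen (f ⁻¹' (A ∩ O (f 0))) := (hA.inter (hOopen (f 0))).preimage f.continuous
  have hQ1 : IsOpen (f ⁻¹' (B ∩ O (f 1))) := (hB.inter (hOopen (f 1))).preimage f.continuous
  obtain ⟨ε₀, hε₀, hball0⟩ := Metric.isOpen_iff.1 hQ0 0 ⟨hA0, hOmem (f 0)⟩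
  obtain ⟨ε₁, hε₁, hball1⟩ := Metric.isOpen_iff.1 hQ1 1 ⟨hB1, hOmem (f 1)⟩
  -- Lebesgue number for the cover by preimages of the relatively inessential sets
  obtain ⟨δ, hδ, hleb⟩ := lebesgue_number_lemma_of_metric
    (isCompact_univ : IsCompact (Set.univ : Set I))
    (fun s : I => (hOopen (f s)).preimage f.continuous)
    (fun t _ => Set.mem_iUnion.2 ⟨t, hOmem (f t)⟩)
  obtain ⟨n, hn⟩ := exists_nat_one_div_lt (lt_min hδ (lt_min hε₀ hε₁))
  set m : ℕ := n + 2 with hmdef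
  have hm2 : 2 ≤ m := by omega
  have hm1 : 1 ≤ m := by omega
  have hm' : (0:ℝ) < m := by positivity
  have hsmall : (1:ℝ)/m < min δ (min ε₀ ε₁) := by
    refine lt_of_le_of_lt ?_ hn
    apply one_div_le_one_div_of_le (by positivity)
    push_cast [hmdef]; linarith
  have hsδ : (1:ℝ)/m < δ := hsmall.trans_le (min_le_left _ _)
  have hsε₀ : (1:ℝ)/m < ε₀ := hsmall.trans_le ((min_le_right _ _).trans (min_le_left _ _))
  have hsε₁ : (1:ℝ)/m < ε₁ := hsmall.trans_le ((min_le_right _ _).trans (min_le_right _ _))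
  have hs : ∀ j : ℕ, ∃ s : I, Metric.ball (nd m j) δ ⊆ f ⁻¹' (O (f s)) :=
    fun j => hleb (nd m j) trivial
  choose sc hsc using hs
  refine ⟨m, fun j => if j ≤ 1 then A ∩ O (f 0) else if m ≤ j then B ∩ O (f 1)
    else O (f (sc j)), hm2, ?_, ?_, ?_⟩
  · intro j hj1 hjm
    by_cases e1 : j ≤ 1
    · -- j = 1
      have hj : j = 1 := le_antisymm e1 hj1
      simp only [if_pos e1]
      refine ⟨hA.inter (hOopen _), relIness_mono Set.inter_subset_right (hOin _), ?_⟩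
      intro t ht1 ht2
      refine hball0 ?_
      rw [Metric.mem_ball, Subtype.dist_eq]
      have ht0 := t.2.1
      have htm : (t:ℝ) ≤ 1/m := by
        rw [hj] at ht2; exact_mod_cast ht2
      have : dist (t:ℝ) ((0:I):ℝ) = (t:ℝ) := by
        rw [show ((0:I):ℝ) = 0 from rfl, Real.dist_eq, sub_zero, abs_of_nonneg ht0]
      rw [this]
      linarith
    · by_cases e2 : m ≤ j
      · -- j = m
        have hj : j = m := le_antisymm hjm e2
        simp only [if_neg e1, if_pos e2]
        refine ⟨hB.inter (hOopen _), relIness_mono Set.inter_subset_right (hOin _), ?_⟩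
        intro t ht1 ht2
        refine hball1 ?_
        rw [Metric.mem_ball, Subtype.dist_eq]
        rw [hj] at ht1
        have htt := t.2.2
        have e1' : ((m:ℝ)-1)/m = 1 - 1/m := by field_simp
        have hd : dist (t:ℝ) ((1:I):ℝ) = 1 - t := by
          rw [show ((1:I):ℝ) = 1 from rfl, Real.dist_eq, abs_of_nonpos (by linarith)]
          ring
        rw [hd]
        rw [e1'] at ht1
        linarith
      · -- middle
        simp only [if_neg e1, if_neg e2]
        refine ⟨hOopen _, hOin _, ?_⟩
        intro t ht1 ht2
        refine hsc j ?_
        rw [Metric.mem_ball, Subtype.dist_eq, nd_coe hjm hm1]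
        have ht0 := t.2.1
        have e : ((j:ℝ)-1)/m = j/m - 1/m := by ring
        rw [e] at ht1
        have : |(t:ℝ) - j/m| ≤ 1/m := by
          rw [abs_le]; exact ⟨by linarith, by linarith⟩
        calc |(t:ℝ) - j/m| ≤ 1/m := this
          _ < δ := hsδ
  · intro x hx
    simp only [if_pos (le_refl 1)] at hx
    exact hx.1
  · intro x hx
    have : ¬ (m ≤ 1) := by omega
    simp only [if_neg this, if_pos (le_refl m)] at hx
    exact hx.1

theorem dist_I_coe (a b : I) : dist a b = |(a:ℝ) - b| := by
  rw [Subtype.dist_eq, Real.dist_eq]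

theorem exists_seg (n : ℕ) (hn : 1 ≤ n) (x : I) :
    ∃ j, 1 ≤ j ∧ j ≤ n ∧ ((j:ℝ)-1)/n ≤ x ∧ (x:ℝ) ≤ j/n := by
  have hn' : (0:ℝ) < n := by exact_mod_cast hn
  have hx0 := x.2.1
  have hx1 := x.2.2
  have hxn : (x:ℝ) * n ≤ n := by nlinarith
  refine ⟨max 1 ⌈(x:ℝ) * n⌉₊, le_max_left _ _, ?_, ?_, ?_⟩
  · refine max_le hn (Nat.ceil_le.2 ?_)
    exact_mod_cast hxn
  · by_cases hc : ⌈(x:ℝ) * n⌉₊ ≤ 1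
    · have : max 1 ⌈(x:ℝ) * n⌉₊ = 1 := by omega
      rw [this]
      simp only [Nat.cast_one, sub_self, zero_div]
      exact hx0
    · have hj : max 1 ⌈(x:ℝ) * n⌉₊ = ⌈(x:ℝ) * n⌉₊ := by omega
      rw [hj]
      rw [div_le_iff₀ hn']
      have := Nat.ceil_lt_add_one (by positivity : (0:ℝ) ≤ (x:ℝ) * n)
      linarith
  · rw [le_div_iff₀ hn']
    calc (x:ℝ) * n ≤ ⌈(x:ℝ) * n⌉₊ := Nat.le_ceil _
      _ ≤ max 1 ⌈(x:ℝ) * n⌉₊ := by exact_mod_cast le_max_right _ _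

theorem cov_W {X : Type*} [TopologicalSpace X] (g : C(I, X)) (W : Set C(I, X))
    (hW : IsOpen W) (hg : g ∈ W) :
    ∃ (n : ℕ) (V : ℕ → Set X), 2 ≤ n ∧
      (∀ j, 1 ≤ j → j ≤ n → IsOpen (V j) ∧
        ∀ t : I, ((j:ℝ)-2)/n ≤ t → (t:ℝ) ≤ ((j:ℝ)+1)/n → g t ∈ V j) ∧
      (∀ p : C(I, X), (∀ j, 1 ≤ j → j ≤ n → ∀ t : I, ((j:ℝ)-1)/n ≤ t → (t:ℝ) ≤ j/n → p t ∈ V j)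
        → p ∈ W) := by
  classical
  have hbasis := TopologicalSpace.isTopologicalBasis_of_subbasis
    (ContinuousMap.compactOpen_eq (X := I) (Y := X))
  obtain ⟨v, hv, hgv, hvW⟩ := hbasis.exists_subset_of_mem_open hg hW
  obtain ⟨T, ⟨hTfin, hTsub⟩, rfl⟩ := hv
  haveI : Finite ↥T := hTfin.to_subtype
  have hKU : ∀ S : T, ∃ K : Set I, ∃ U : Set X, IsCompact K ∧ IsOpen U ∧
      (S : Set C(I, X)) = {f : C(I, X) | Set.MapsTo ⇑f K U} := by
    rintro ⟨S, hS⟩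
    obtain ⟨K, hK, U, hU, hSeq⟩ := hTsub hS
    exact ⟨K, U, hK, hU, hSeq.symm⟩
  choose K U hKc hUo hSeq using hKU
  have hgT : ∀ S : T, Set.MapsTo g (K S) (U S) := by
    intro S
    have := Set.mem_sInter.1 hgv S S.2
    rwa [hSeq S] at this
  set N : I → Set X := fun t => ⋂ S : T, if t ∈ K S then U S else Set.univ with hN
  have hNopen : ∀ t, IsOpen (N t) := fun t =>
    isOpen_iInter_of_finite fun S => by split_ifs; exacts [hUo S, isOpen_univ]
  have hgN : ∀ t, g t ∈ N t := fun t =>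
    Set.mem_iInter.2 fun S => by split_ifs with h; exacts [hgT S h, trivial]
  have hNsub : ∀ t (S : T), t ∈ K S → N t ⊆ U S := fun t S ht => by
    intro y hy
    have := Set.mem_iInter.1 hy S
    rwa [if_pos ht] at this
  set E : I → Set I := fun t =>
    (g ⁻¹' (N t)) ∩ ⋂ S : T, (if t ∈ K S then Set.univ else (K S)ᶜ) with hE
  have hEopen : ∀ t, IsOpen (E t) := fun t => by
    refine ((hNopen t).preimage g.continuous).inter (isOpen_iInter_of_finite fun S => ?_)
    split_ifs
    exacts [isOpen_univ, (hKc S).isClosed.isOpen_compl]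
  have htE : ∀ t, t ∈ E t := fun t => by
    refine ⟨hgN t, Set.mem_iInter.2 fun S => ?_⟩
    split_ifs with h
    exacts [trivial, h]
  have hEK : ∀ t (S : T), t ∉ K S → E t ⊆ (K S)ᶜ := fun t S ht => by
    intro y hy
    have := Set.mem_iInter.1 hy.2 S
    rwa [if_neg ht] at this
  choose ρ hρpos hρball using fun t => Metric.isOpen_iff.1 (hEopen t) t (htE t)
  obtain ⟨s, hs⟩ := isCompact_univ.elim_finite_subcover
    (fun t : I => Metric.ball t (ρ t / 2)) (fun t => Metric.isOpen_ball)
    (fun t _ => Set.mem_iUnion.2 ⟨t, Metric.mem_ball_self (half_pos (hρpos t))⟩)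
  have hne : s.Nonempty := by
    rcases Set.mem_iUnion₂.1 (hs (Set.mem_univ 0)) with ⟨c, hc, -⟩
    exact ⟨c, hc⟩
  have hρmin : 0 < s.inf' hne ρ := by
    rw [Finset.lt_inf'_iff]
    exact fun c _ => hρpos c
  obtain ⟨k, hk⟩ := exists_nat_one_div_lt (by positivity : 0 < s.inf' hne ρ / 4)
  set n : ℕ := k + 2 with hndef
  have hn2 : 2 ≤ n := by omega
  have hn1 : 1 ≤ n := by omega
  have hn' : (0:ℝ) < n := by positivity
  have hsmall : (1:ℝ)/n < s.inf' hne ρ / 4 := by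
    refine lt_of_le_of_lt ?_ hk
    apply one_div_le_one_div_of_le (by positivity)
    push_cast [hndef]; linarith
  have hc' : ∀ j : ℕ, ∃ c ∈ s, nd n j ∈ Metric.ball c (ρ c / 2) := by
    intro j
    rcases Set.mem_iUnion₂.1 (hs (Set.mem_univ (nd n j))) with ⟨c, hc1, hc2⟩
    exact ⟨c, hc1, hc2⟩
  choose c hcs hcb using hc'
  have hρc : ∀ j, (1:ℝ)/n < ρ (c j) / 4 := fun j =>
    hsmall.trans_le (by
      have := Finset.inf'_le ρ (hcs j)
      linarith)
  refine ⟨n, fun j => N (c j), hn2, ?_, ?_⟩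
  · intro j hj1 hjn
    refine ⟨hNopen _, ?_⟩
    intro t ht1 ht2
    have hb : t ∈ Metric.ball (c j) (ρ (c j)) := by
      have d1 : dist t (nd n j) ≤ 2/n := by
        rw [dist_I_coe, nd_coe hjn hn1, abs_le]
        constructor
        · have e : ((j:ℝ)-2)/n = j/n - 2/n := by ring
          rw [e] at ht1; linarith
        · have e : ((j:ℝ)+1)/n = j/n + 1/n := by ring
          rw [e] at ht2
          have h2n : (2:ℝ)/n = 1/n + 1/n := by ring
          have : (0:ℝ) < 1/n := by positivity
          rw [h2n]
          linarith
      have d2 : dist (nd n j) (c j) < ρ (c j) / 2 := hcb j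
      have := hρc j
      calc dist t (c j) ≤ dist t (nd n j) + dist (nd n j) (c j) := dist_triangle _ _ _
        _ < 2/n + ρ (c j) / 2 := by linarith
        _ ≤ ρ (c j) := by
            have h1n : (1:ℝ)/n < ρ (c j)/4 := hρc j
            have h2 : (2:ℝ)/n = 2 * (1/n) := by ring
            rw [h2]; linarith
    exact (hρball (c j) hb).1
  · intro p hp
    refine hvW (Set.mem_sInter.2 fun S hS => ?_)
    show p ∈ (↑(⟨S, hS⟩ : ↥T) : Set C(I, X))
    rw [hSeq ⟨S, hS⟩]
    intro x hx
    obtain ⟨j, hj1, hjn, hx1, hx2⟩ := exists_seg n hn1 x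
    have hxb : x ∈ Metric.ball (c j) (ρ (c j)) := by
      have d1 : dist x (nd n j) ≤ 1/n := by
        rw [dist_I_coe, nd_coe hjn hn1, abs_le]
        constructor
        · have e : ((j:ℝ)-1)/n = j/n - 1/n := by ring
          rw [e] at hx1; linarith
        · have : (0:ℝ) < 1/n := by positivity
          linarith
      have d2 : dist (nd n j) (c j) < ρ (c j) / 2 := hcb j
      have h1n := hρc j
      calc dist x (c j) ≤ dist x (nd n j) + dist (nd n j) (c j) := dist_triangle _ _ _
        _ < 1/n + ρ (c j) / 2 := by linarith
        _ ≤ ρ (c j) := by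
            have : (0:ℝ) < 1/n := by positivity
            linarith
    have hcK : c j ∈ K ⟨S, hS⟩ := by
      by_contra hcK
      exact (hEK (c j) ⟨S, hS⟩ hcK (hρball (c j) hxb)) hx
    exact hNsub (c j) ⟨S, hS⟩ hcK (hp j hj1 hjn x hx1 hx2)

/-! ### the reparametrising map φ -/

def phiFun (n : ℕ) (t : ℝ) : ℝ :=
  max (min ((n:ℝ) * t / 2) (1/4 + (t - 1/(2*(n:ℝ))) * ((n:ℝ)/(4*((n:ℝ)-1)))))
    (1 + (n:ℝ)*(t-1))

variable {n : ℕ}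

section phi
variable (hn : 2 ≤ n)
include hn

theorem Nfacts : (2:ℝ) ≤ (n:ℝ) ∧ (0:ℝ) < (n:ℝ) - 1 ∧ (0:ℝ) < (n:ℝ) := by
  have : (2:ℝ) ≤ (n:ℝ) := by exact_mod_cast hn
  exact ⟨this, by linarith, by linarith⟩

theorem sfacts : 4*((n:ℝ)/(4*((n:ℝ)-1)))*((n:ℝ)-1) = (n:ℝ)
    ∧ 2*(1/(2*(n:ℝ)))*(n:ℝ) = 1 ∧ (0:ℝ) < (n:ℝ)/(4*((n:ℝ)-1))
    ∧ (0:ℝ) < 1/(2*(n:ℝ)) := by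
  obtain ⟨hN, hN1, hNp⟩ := Nfacts hn
  refine ⟨by field_simp, by field_simp, by positivity, by positivity⟩

theorem phiFun_mem {t : ℝ} (ht0 : 0 ≤ t) (ht1 : t ≤ 1) :
    0 ≤ phiFun n t ∧ phiFun n t ≤ 1 := by
  obtain ⟨hN, hN1, hNp⟩ := Nfacts hn
  obtain ⟨H4, H2, hsp, hap⟩ := sfacts hn
  unfold phiFun
  constructor
  · refine le_max_of_le_left (le_min (by positivity) ?_)
    nlinarith [mul_nonneg ht0 hsp.le, mul_pos hap hsp]
  · apply max_le
    · refine (min_le_right _ _).trans ?_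
      nlinarith [mul_pos hap hsp]
    · nlinarith

theorem phiFun_zero : phiFun n 0 = 0 := by
  obtain ⟨hN, hN1, hNp⟩ := Nfacts hn
  obtain ⟨H4, H2, hsp, hap⟩ := sfacts hn
  unfold phiFun
  rw [mul_zero, zero_div, min_eq_left (by nlinarith [mul_pos hap hsp]), max_eq_left (by nlinarith)]

theorem phiFun_one : phiFun n 1 = 1 := by
  obtain ⟨hN, hN1, hNp⟩ := Nfacts hn
  obtain ⟨H4, H2, hsp, hap⟩ := sfacts hn
  unfold phiFun
  rw [max_eq_right]
  · ring
  · refine (min_le_right _ _).trans ?_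
    nlinarith [mul_pos hap hsp]

theorem phiFun_gt_quarter {t : ℝ} (ht : 1/(n:ℝ) ≤ t) : 1/4 < phiFun n t := by
  obtain ⟨hN, hN1, hNp⟩ := Nfacts hn
  obtain ⟨H4, H2, hsp, hap⟩ := sfacts hn
  refine lt_of_lt_of_le (lt_min ?_ ?_) (le_max_left _ _)
  · rw [div_le_iff₀ hNp] at ht
    nlinarith
  · rw [div_le_iff₀ hNp] at ht
    nlinarith [mul_pos hap hsp, mul_pos hNp hsp]

theorem phiFun_ub {t : ℝ} (ht1 : t ≤ 1) (hle : phiFun n t ≤ 1/2) :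
    4 * phiFun n t - 1 ≤ t + 1/(n:ℝ) := by
  obtain ⟨hN, hN1, hNp⟩ := Nfacts hn
  obtain ⟨H4, H2, hsp, hap⟩ := sfacts hn
  have h1n : (1:ℝ)/(n:ℝ) = 1/(n:ℝ) := rfl
  have hL3 : 1 + (n:ℝ)*(t-1) ≤ phiFun n t := le_max_right _ _
  have hup : phiFun n t ≤ max (1/4 + (t - 1/(2*(n:ℝ))) * ((n:ℝ)/(4*((n:ℝ)-1)))) (1 + (n:ℝ)*(t-1)) :=
    max_le_max (min_le_right _ _) le_rfl
  have h1N : (0:ℝ) < 1/(n:ℝ) := by positivity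
  rcases le_or_gt (1 + (n:ℝ)*(t-1)) (1/4 + (t - 1/(2*(n:ℝ))) * ((n:ℝ)/(4*((n:ℝ)-1)))) with hc | hc
  · rw [max_eq_left hc] at hup
    -- 4*(1/4 + (t-a)s) - 1 ≤ t + 1/N
    have e : 4 * (1/4 + (t - 1/(2*(n:ℝ))) * ((n:ℝ)/(4*((n:ℝ)-1)))) - 1
        = (t - 1/(2*(n:ℝ))) * (n:ℝ) / ((n:ℝ)-1) := by
      field_simp
      ring
    have key : 4 * (1/4 + (t - 1/(2*(n:ℝ))) * ((n:ℝ)/(4*((n:ℝ)-1)))) - 1 ≤ t + 1/(n:ℝ) := by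
      rw [e, div_le_iff₀ hN1]
      have e1 : (1/(2*(n:ℝ)))*(n:ℝ) = 1/2 := by field_simp
      have e2 : (1/(n:ℝ))*(n:ℝ) = 1 := by field_simp
      have e3 : (1:ℝ)/(n:ℝ) ≤ 1/2 := by
        rw [div_le_div_iff₀ hNp (by norm_num)]
        linarith
      nlinarith [e1, e2, e3]
    linarith
  · rw [max_eq_right hc.le] at hup
    have hL3le : 1 + (n:ℝ)*(t-1) ≤ 1/2 := le_trans hL3 hle
    nlinarith [mul_pos hNp h1N]

theorem phiFun_lb {t : ℝ} (ht0 : 0 ≤ t) (hge : 1/4 ≤ phiFun n t) (hmem : phiFun n t ≤ 1) :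
    t - 1/(n:ℝ) ≤ 4 * phiFun n t - 1 := by
  obtain ⟨hN, hN1, hNp⟩ := Nfacts hn
  obtain ⟨H4, H2, hsp, hap⟩ := sfacts hn
  rcases le_or_gt t (1/(2*(n:ℝ))) with hta | hta
  · have : t - 1/(n:ℝ) ≤ 0 := by
      have : (1:ℝ)/(2*(n:ℝ)) ≤ 1/(n:ℝ) := by
        apply one_div_le_one_div_of_le hNp
        linarith
      linarith
    linarith
  · have hmin : min ((n:ℝ) * t / 2) (1/4 + (t - 1/(2*(n:ℝ))) * ((n:ℝ)/(4*((n:ℝ)-1))))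
        ≤ phiFun n t := le_max_left _ _
    rcases min_cases ((n:ℝ) * t / 2) (1/4 + (t - 1/(2*(n:ℝ))) * ((n:ℝ)/(4*((n:ℝ)-1)))) with
      ⟨he, _⟩ | ⟨he, _⟩ <;> rw [he] at hmin
    · -- min = L1 = N t/2, and t > a
      have haN : (1/(2*(n:ℝ)))*(n:ℝ) = 1/2 := by field_simp
      have h6 := mul_lt_mul_of_pos_right hta hNp
      have h7 := mul_lt_mul_of_pos_right hta hN1
      have e4 : (1:ℝ)/(n:ℝ) = 2*(1/(2*(n:ℝ))) := by ring
      nlinarith [haN, h6, h7, e4, hmin, hap]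
    · -- min = L2
      have haN : (1/(2*(n:ℝ)))*(n:ℝ) = 1/2 := by field_simp
      have e2 : (1/(n:ℝ))*(n:ℝ) = 1 := by field_simp
      have h8 : 4*(t - 1/(2*(n:ℝ)))*((n:ℝ)/(4*((n:ℝ)-1)))*((n:ℝ)-1)
          = (t - 1/(2*(n:ℝ)))*(n:ℝ) := by field_simp
      nlinarith [h8, hN1, haN, e2, hta, ht0, hmin, hap]

theorem phiFun_le_half {t : ℝ} (ht0 : 0 ≤ t) (ht : t ≤ 1 - 1/(n:ℝ)) :
    phiFun n t ≤ 1/2 := by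
  obtain ⟨hN, hN1, hNp⟩ := Nfacts hn
  obtain ⟨H4, H2, hsp, hap⟩ := sfacts hn
  have h1N : (0:ℝ) < 1/(n:ℝ) := by positivity
  have hN1' : (n:ℝ) * (1/(n:ℝ)) = 1 := by field_simp
  apply max_le
  · refine (min_le_right _ _).trans ?_
    nlinarith [mul_pos hap hsp, mul_pos hNp hsp, mul_pos h1N hsp]
  · nlinarith

end phi


def phiC (n : ℕ) (hn : 2 ≤ n) : C(I, I) :=
  ⟨fun t => ⟨phiFun n t, (phiFun_mem hn t.2.1 t.2.2).1, (phiFun_mem hn t.2.1 t.2.2).2⟩, by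
    refine Continuous.subtype_mk ?_ _
    unfold phiFun
    exact (((continuous_const.mul continuous_subtype_val).div_const _).min
      (continuous_const.add ((continuous_subtype_val.sub continuous_const).mul
        continuous_const))).max
      (continuous_const.add (continuous_const.mul (continuous_subtype_val.sub continuous_const)))⟩

@[simp] theorem phiC_coe (n : ℕ) (hn : 2 ≤ n) (t : I) :
    ((phiC n hn t : I) : ℝ) = phiFun n (t:ℝ) := rfl

theorem phiC_zero (n : ℕ) (hn : 2 ≤ n) : phiC n hn 0 = 0 := by
  ext
  rw [phiC_coe]
  exact (by exact_mod_cast phiFun_zero hn : phiFun n ((0:I):ℝ) = ((0:I):ℝ))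

theorem phiC_one (n : ℕ) (hn : 2 ≤ n) : phiC n hn 1 = 1 := by
  ext
  rw [phiC_coe]
  exact (by exact_mod_cast phiFun_one hn : phiFun n ((1:I):ℝ) = ((1:I):ℝ))

theorem concat_apply {X : Type*} [TopologicalSpace X] (α β : C(I, X)) (h : β 1 = α 0) (t : I) :
    concat α β h t = if ht : (t:ℝ) ≤ 1/2
      then β ⟨2*(t:ℝ), (mul_pos_mem_iff zero_lt_two).2 ⟨t.2.1, ht⟩⟩
      else α ⟨2*(t:ℝ)-1, two_mul_sub_one_mem_iff.2 ⟨(not_le.1 ht).le, t.2.2⟩⟩ := by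
  show ((toPath β).trans ((toPath α).cast h rfl)) t = _
  rw [Path.trans_apply]
  split_ifs <;> rfl

/-! ### the reparametrised concatenation sits in the basic neighbourhood -/

theorem w_seg {X : Type*} [TopologicalSpace X] (n : ℕ) (hn : 2 ≤ n) (V : ℕ → Set X)
    (g θ δ : C(I, X)) (pθ : θ 1 = g 0) (pδ : concat g θ pθ 1 = δ 0)
    (hθ : Set.range θ ⊆ V 1) (hδ : Set.range δ ⊆ V n)
    (hg : ∀ j, 1 ≤ j → j ≤ n → ∀ t : I, ((j:ℝ)-2)/n ≤ t → (t:ℝ) ≤ ((j:ℝ)+1)/n → g t ∈ V j)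
    (j : ℕ) (hj1 : 1 ≤ j) (hjn : j ≤ n) (t : I)
    (ht1 : ((j:ℝ)-1)/n ≤ t) (ht2 : (t:ℝ) ≤ j/n) :
    ((concat δ (concat g θ pθ) pδ).comp (phiC n hn)) t ∈ V j := by
  obtain ⟨hN, hN1, hNp⟩ := Nfacts hn
  have ht0 := t.2.1
  have htt1 := t.2.2
  have humem := phiFun_mem hn ht0 htt1
  have heval : ((concat δ (concat g θ pθ) pδ).comp (phiC n hn)) t
      = concat δ (concat g θ pθ) pδ (phiC n hn t) := rfl
  rw [heval, concat_apply]
  split_ifs with h1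
  · -- phiFun n t ≤ 1/2
    rw [concat_apply]
    split_ifs with h2
    · -- 2 * phi ≤ 1/2, i.e. phi ≤ 1/4 : the θ part, must have j = 1
      have hj : j = 1 := by
        by_contra hj
        have hj2 : 2 ≤ j := by omega
        have h1nt : 1/(n:ℝ) ≤ t := by
          refine le_trans ?_ ht1
          rw [div_le_div_iff₀ hNp hNp]
          have : (2:ℝ) ≤ (j:ℝ) := by exact_mod_cast hj2
          nlinarith
        have := phiFun_gt_quarter hn h1nt
        have h2' : 2 * phiFun n (t:ℝ) ≤ 1/2 := h2
        linarith
      subst hj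
      exact hθ ⟨_, rfl⟩
    · -- the g part
      have h1' : phiFun n (t:ℝ) ≤ 1/2 := h1
      have h2' : ¬ (2 * phiFun n (t:ℝ) ≤ 1/2) := h2
      refine hg j hj1 hjn _ ?_ ?_
      · show ((j:ℝ)-2)/n ≤ 2*(2*phiFun n (t:ℝ)) - 1
        have hq : 1/4 ≤ phiFun n (t:ℝ) := by
          by_contra hq
          push_neg at hq
          exact h2' (by linarith)
        have := phiFun_lb hn ht0 hq humem.2
        have e : ((j:ℝ)-2)/n = ((j:ℝ)-1)/n - 1/n := by ring
        rw [e]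
        have : ((j:ℝ)-1)/n - 1/n ≤ (t:ℝ) - 1/n := by linarith
        linarith [phiFun_lb hn ht0 hq humem.2]
      · show 2*(2*phiFun n (t:ℝ)) - 1 ≤ ((j:ℝ)+1)/n
        have := phiFun_ub hn htt1 h1'
        have e : ((j:ℝ)+1)/n = (j:ℝ)/n + 1/n := by ring
        rw [e]
        linarith
  · -- the δ part : must have j = n
    have h1' : ¬ (phiFun n (t:ℝ) ≤ 1/2) := h1
    have hj : j = n := by
      by_contra hj
      have hjn' : j + 1 ≤ n := by omega
      have hle : (t:ℝ) ≤ 1 - 1/(n:ℝ) := by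
        refine le_trans ht2 ?_
        rw [div_le_iff₀ hNp]
        have : ((j:ℝ)+1) ≤ (n:ℝ) := by exact_mod_cast hjn'
        have e2 : (1/(n:ℝ))*(n:ℝ) = 1 := by field_simp
        nlinarith
      have := phiFun_le_half hn ht0 hle
      exact h1' this
    subst hj
    exact hδ ⟨_, rfl⟩


/-- For a locally path connected, semilocally simply connected `X`, the
quotient map `q : P(X) → Π₁(X)` is an open map. -/
theorem stmt3 {X : Type*} [TopologicalSpace X] [LocallyPathConnectedSpace X]
    (hX : SemilocSimplyConnected X) :
    IsOpenMap (pq : C(I, X) → Pi1 X) := by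
  intro W hW
  suffices hS : IsOpen (pq ⁻¹' (pq '' W)) by
    exact isOpen_coinduced.mpr hS
  rw [isOpen_iff_forall_mem_open]
  intro f hf
  obtain ⟨g, hgW, hgf⟩ := hf
  have hrel : pRel g f := Quotient.exact hgf
  have ef0 : g 0 = f 0 := hrel.endpts (by simp)
  have ef1 : g 1 = f 1 := hrel.endpts (by simp)
  obtain ⟨n, V, hn2, hVprop, hVW⟩ := cov_W g W hW hgW
  have hn1 : 1 ≤ n := by omega
  have hNp : (0:ℝ) < n := by
    have : (2:ℝ) ≤ n := by exact_mod_cast hn2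
    linarith
  have hV1 : f 0 ∈ V 1 := by
    rw [← ef0]
    refine (hVprop 1 le_rfl hn1).2 0 ?_ ?_
    · rw [show ((0:I):ℝ) = 0 from rfl]
      apply div_nonpos_of_nonpos_of_nonneg <;> [norm_num; positivity]
    · rw [show ((0:I):ℝ) = 0 from rfl]
      positivity
  have hVn : f 1 ∈ V n := by
    rw [← ef1]
    refine (hVprop n hn1 le_rfl).2 1 ?_ ?_
    · rw [show ((1:I):ℝ) = 1 from rfl, div_le_one hNp]
      linarith
    · rw [show ((1:I):ℝ) = 1 from rfl, le_div_iff₀ hNp]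
      linarith
  obtain ⟨m, P, hm2, hPprop, hP1A, hPmB⟩ := cov_f hX f (V 1) (V n)
    (hVprop 1 le_rfl hn1).1 (hVprop n hn1 le_rfl).1 hV1 hVn
  have hm1 : 1 ≤ m := by omega
  have hMp : (0:ℝ) < m := by
    have : (1:ℝ) ≤ m := by exact_mod_cast hm1
    linarith
  set P' : ℕ → Set X := fun i => P (max 1 (min i m)) with hP'def
  have hidx : ∀ i : ℕ, 1 ≤ max 1 (min i m) ∧ max 1 (min i m) ≤ m :=
    fun i => ⟨le_max_left _ _, by omega⟩
  have hP'eq : ∀ i, 1 ≤ i → i ≤ m → P' i = P i := by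
    intro i h1 h2
    have e : max 1 (min i m) = i := by omega
    rw [hP'def]; simp only [e]
  have hP'open : ∀ i, IsOpen (P' i) := fun i => (hPprop _ (hidx i).1 (hidx i).2).1
  set Cs : ℕ → Set X := fun i => pathComponentIn (P' i ∩ P' (i+1)) (f (nd m i)) with hCsdef
  have hCopen : ∀ i, IsOpen (Cs i) :=
    fun i => ((hP'open i).inter (hP'open (i+1))).pathComponentIn _
  have hfnd : ∀ i, i ≤ m → ∀ j, 1 ≤ j → j ≤ m → ((j:ℝ)-1) ≤ i → (i:ℝ) ≤ j →
      f (nd m i) ∈ P j := by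
    intro i him j hj1 hjm hji1 hji2
    refine (hPprop j hj1 hjm).2.2 (nd m i) ?_ ?_
    · rw [nd_coe him hm1]; gcongr
    · rw [nd_coe him hm1]; gcongr
  have hfP' : ∀ i, i ≤ m → f (nd m i) ∈ P' i ∩ P' (i+1) := by
    intro i him
    constructor
    · rw [hP'def]
      rcases Nat.eq_zero_or_pos i with h0 | h0
      · subst h0
        have e : max 1 (min 0 m) = 1 := by omega
        simp only [e]
        exact hfnd 0 (by omega) 1 le_rfl hm1 (by norm_num) (by norm_num)
      · have e : max 1 (min i m) = i := by omega
        simp only [e]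
        exact hfnd i him i h0 him (by push_cast; linarith) le_rfl
    · rw [hP'def]
      by_cases him' : i = m
      · rw [him']
        have e : max 1 (min (m+1) m) = m := by omega
        simp only [e]
        exact hfnd m le_rfl m hm1 le_rfl (by push_cast; linarith) le_rfl
      · have e : max 1 (min (i+1) m) = i+1 := by omega
        simp only [e]
        exact hfnd i him (i+1) (by omega) (by omega) (by push_cast; linarith)
          (by push_cast; linarith)
  set seg : ℕ → Set I := fun j => {t : I | ((j:ℝ)-1)/m ≤ t ∧ (t:ℝ) ≤ j/m} with hsegdef
  have hsegcompact : ∀ j, IsCompact (seg j) := by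
    intro j
    have e : seg j = Subtype.val ⁻¹' (Set.Icc (((j:ℝ)-1)/m) (j/m)) := rfl
    rw [e]
    exact (IsClosed.preimage continuous_subtype_val isClosed_Icc).isCompact
  set M : Set C(I, X) :=
    (⋂ j ∈ Finset.Icc 1 m, {p : C(I, X) | Set.MapsTo ⇑p (seg j) (P j)}) ∩
    (⋂ i ∈ Finset.range (m+1), {p : C(I, X) | p (nd m i) ∈ Cs i}) with hMdef
  refine ⟨M, ?_, ?_, ?_⟩
  · -- M ⊆ pq ⁻¹' (pq '' W)
    intro h hhM
    obtain ⟨hh1, hh2⟩ := hhM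
    have hseg' : ∀ j, 1 ≤ j → j ≤ m → ∀ t : I, ((j:ℝ)-1)/m ≤ t → (t:ℝ) ≤ j/m → h t ∈ P j := by
      intro j h1 h2 t ht1 ht2
      exact Set.mem_iInter₂.1 hh1 j (Finset.mem_Icc.2 ⟨h1, h2⟩) ⟨ht1, ht2⟩
    have hjoin : ∀ i, i ≤ m → JoinedIn (P' i ∩ P' (i+1)) (f (nd m i)) (h (nd m i)) := by
      intro i him
      exact Set.mem_iInter₂.1 hh2 i (Finset.mem_range.2 (by omega))
    set lam : ℕ → C(I, X) := fun i =>
      if hi : i ≤ m then ((hjoin i hi).somePath).toContinuousMap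
      else ContinuousMap.const I (f 0) with hlamdef
    have hl0 : ∀ i, i ≤ m → lam i 0 = f (nd m i) := by
      intro i hi
      rw [hlamdef]
      simp only [dif_pos hi]
      exact ((hjoin i hi).somePath).source
    have hl1 : ∀ i, i ≤ m → lam i 1 = h (nd m i) := by
      intro i hi
      rw [hlamdef]
      simp only [dif_pos hi]
      exact ((hjoin i hi).somePath).target
    have hlr : ∀ i, i ≤ m → Set.range (lam i) ⊆ P' i ∩ P' (i+1) := by
      intro i hi
      rw [hlamdef]
      simp only [dif_pos hi]
      rintro _ ⟨t, rfl⟩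
      exact (hjoin i hi).somePath_mem t
    obtain ⟨θ, δ, h₁, h₂, hθ0, hδ1, hθr, hδr, hrel2⟩ := lemH m hm1 P'
      (fun j h1 h2 => by rw [hP'eq j h1 h2]; exact (hPprop j h1 h2).2.1)
      f h
      (fun j h1 h2 t ht1 ht2 => by rw [hP'eq j h1 h2]; exact (hPprop j h1 h2).2.2 t ht1 ht2)
      (fun j h1 h2 t ht1 ht2 => by rw [hP'eq j h1 h2]; exact hseg' j h1 h2 t ht1 ht2)
      lam hl0 hl1 hlr
    have h₁g : θ 1 = g 0 := h₁.trans ef0.symm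
    have pf2g : concat g θ h₁g 1 = δ 0 := (concat_one g θ h₁g).trans (ef1.trans h₂)
    have step1 : pRel (concat f θ h₁) (concat g θ h₁g) :=
      prel_concat hrel.symm' (pRel.rfl θ) h₁ h₁g
    have step2 : pRel (concat δ (concat f θ h₁) ((concat_one f θ h₁).trans h₂))
        (concat δ (concat g θ h₁g) pf2g) :=
      prel_concat (pRel.rfl δ) step1 _ pf2g
    have hwrel : pRel (concat δ (concat g θ h₁g) pf2g)
        ((concat δ (concat g θ h₁g) pf2g).comp (phiC n hn2)) := by
      refine prel_congr ?_ rfl (prel_reparam (concat δ (concat g θ h₁g) pf2g)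
        (ContinuousMap.id I) (phiC n hn2) ?_ ?_)
      · rfl
      · rw [ContinuousMap.id_apply, phiC_zero]
      · rw [ContinuousMap.id_apply, phiC_one]
    have hθV : Set.range θ ⊆ V 1 := by
      refine hθr.trans (Set.inter_subset_right.trans ?_)
      rw [hP'eq 1 le_rfl hm1]
      exact hP1A
    have hδV : Set.range δ ⊆ V n := by
      refine hδr.trans (Set.inter_subset_left.trans ?_)
      rw [hP'eq m hm1 le_rfl]
      exact hPmB
    have hwW : (concat δ (concat g θ h₁g) pf2g).comp (phiC n hn2) ∈ W := by
      refine hVW _ ?_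
      intro j hj1 hjn t ht1 ht2
      exact w_seg n hn2 V g θ δ h₁g pf2g hθV hδV
        (fun j a b t c d => (hVprop j a b).2 t c d) j hj1 hjn t ht1 ht2
    show pq h ∈ pq '' W
    refine ⟨(concat δ (concat g θ h₁g) pf2g).comp (phiC n hn2), hwW, ?_⟩
    refine Quotient.sound ?_
    exact (((hrel2.trans' step2).trans' hwrel).symm' : pRel _ h)
  · -- IsOpen M
    apply IsOpen.inter
    · refine isOpen_biInter_finset fun j hj => ?_
      obtain ⟨hj1, hjm⟩ := Finset.mem_Icc.1 hj
      exact ContinuousMap.isOpen_setOf_mapsTo (hsegcompact j) (hPprop j hj1 hjm).1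
    · refine isOpen_biInter_finset fun i _ => ?_
      exact (hCopen i).preimage (continuous_eval_const (nd m i))
  · -- f ∈ M
    constructor
    · refine Set.mem_iInter₂.2 fun j hj => ?_
      obtain ⟨hj1, hjm⟩ := Finset.mem_Icc.1 hj
      intro t ht
      exact (hPprop j hj1 hjm).2.2 t ht.1 ht.2
    · refine Set.mem_iInter₂.2 fun i hi => ?_
      exact mem_pathComponentIn_self (hfP' i (Nat.lt_succ_iff.1 (Finset.mem_range.1 hi)))

end
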